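/- Let λ_1 ∈ ℝ, a ∈ ℝ, c ∈ ℝ, μ_1 ∈ ℂ with λ_1 + a + μ_1 ≠ 0, and set B = (μ_1 - conj(μ_1))/(λ_1 + a + μ_1). Then the minimum over Y ∈ ℝ of |c(1 - B/2 + (B/2) tanh Y)|² equals c²(Re(λ_1 + a + μ_1))²/|λ_1 + a + μ_1|², so the depth of the cavity of the dark soliton, c² - min |q|², equals c² Im(μ_1)² / ((λ_1 + a + Re μ_1)² + Im(μ_1)²). -/

import Mathlib

open Complex

/-- The minimum of the dark-soliton intensity and the depth of the cavity. -/
theorem stmt_6 (l1 a c : ℝ) (μ1 : ℂ) (hden : (l1 : ℂ) + a + μ1 ≠ 0)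
    (B : ℂ) (hB : B = (μ1 - (starRingEnd ℂ) μ1) / ((l1 : ℂ) + a + μ1)) :
    IsLeast
      (Set.range fun Y : ℝ =>
        (norm ((c : ℂ) * (1 - B / 2 + (B / 2) * (Real.tanh Y : ℂ)))) ^ 2)
      (c ^ 2 * (((l1 : ℂ) + a + μ1).re) ^ 2 / (norm ((l1 : ℂ) + a + μ1)) ^ 2) ∧
    c ^ 2 - c ^ 2 * (((l1 : ℂ) + a + μ1).re) ^ 2 / (norm ((l1 : ℂ) + a + μ1)) ^ 2 =
      c ^ 2 * μ1.im ^ 2 / ((l1 + a + μ1.re) ^ 2 + μ1.im ^ 2) := by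
  set d : ℂ := (l1 : ℂ) + a + μ1 with hd
  have hBd : B * d = 2 * (d.im : ℝ) * I := by
    rw [hB, div_mul_cancel₀ _ hden, Complex.sub_conj]
    norm_num [hd]
  have key : ∀ t : ℝ, (norm ((c : ℂ) * (1 - B / 2 + (B / 2) * (t : ℂ)))) ^ 2
      = c ^ 2 * (d.re ^ 2 + d.im ^ 2 * t ^ 2) / (norm d) ^ 2 := by
    intro t
    have h1 : (c : ℂ) * (1 - B / 2 + (B / 2) * (t : ℂ))
        = (c : ℂ) * ((d.re : ℂ) + (d.im : ℂ) * t * I) / d := by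
      rw [eq_div_iff hden]
      have hdd : d = (d.re : ℂ) + (d.im : ℂ) * I := (Complex.re_add_im d).symm
      have : (1 - B / 2 + (B / 2) * (t : ℂ)) * d = d - (B * d) / 2 + (B * d) / 2 * t := by
        ring
      calc (c : ℂ) * (1 - B / 2 + (B / 2) * (t : ℂ)) * d
          = (c : ℂ) * (d - (B * d) / 2 + (B * d) / 2 * t) := by ring
        _ = (c : ℂ) * ((d.re : ℂ) + (d.im : ℂ) * t * I) := by
            rw [hBd]; nth_rewrite 1 [hdd]; ring
    rw [h1, norm_div, norm_mul, div_pow, mul_pow]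
    congr 1
    · congr 1
      · simp [Complex.sq_norm]
      · rw [Complex.sq_norm, Complex.normSq_apply]
        simp
        ring
  constructor
  · constructor
    · refine ⟨0, ?_⟩
      simp only [Real.tanh_zero]
      rw [show ((0:ℝ):ℂ) = (0:ℂ) by norm_num] at *
      have := key 0
      simpa using this
    · rintro x ⟨Y, rfl⟩
      simp only
      rw [key (Real.tanh Y)]
      have hane : norm d ≠ 0 := by simpa using hden
      have habs : (0:ℝ) < (norm d) ^ 2 := by positivity
      rw [div_le_div_iff₀ habs habs]
      nlinarith [sq_nonneg (c * d.im * Real.tanh Y), sq_nonneg (norm d)]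
  · have habs : (norm d) ^ 2 = d.re ^ 2 + d.im ^ 2 := by
      rw [Complex.sq_norm, Complex.normSq_apply]; ring
    have him : d.im = μ1.im := by simp [hd]
    have hre : d.re = l1 + a + μ1.re := by simp [hd]
    have hne : d.re ^ 2 + d.im ^ 2 ≠ 0 := by
      rw [← habs]
      have : norm d ≠ 0 := by simpa using hden
      positivity
    rw [habs, him, hre]
    rw [him, hre] at hne
    field_simp
    ring
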